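/- Let a, c > 0, b, d ≥ 0, P_max > 0. For any r₁ with log₂(1 + a·P_max/(1 + b·P_max)) ≤ r₁ ≤ log₂(1 + a·P_max), the value P₂ = (1/b)·(a·P_max/(2^{r₁} − 1) − 1) (with b > 0) satisfies 0 ≤ P₂ ≤ P_max and log₂(1 + a·P_max/(1 + b·P₂)) = r₁; moreover among all (P₁, P₂) ∈ [0, P_max]² with log₂(1 + a·P₁/(1 + b·P₂)) = r₁, the rate R₂ = log₂(1 + c·P₂/(1 + d·P₁)) is maximized at P₁ = P_max and this value of P₂. -/

import Mathlib

open Real Set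

theorem interval2_frontier (a b c d Pmax : ℝ)
    (ha : 0 < a) (hc : 0 < c) (hb : 0 < b) (hd : 0 ≤ d) (hP : 0 < Pmax)
    (r₁ : ℝ)
    (hr₁ : Real.logb 2 (1 + a * Pmax / (1 + b * Pmax)) ≤ r₁)
    (hr₂ : r₁ ≤ Real.logb 2 (1 + a * Pmax)) :
    0 ≤ (1 / b) * (a * Pmax / ((2:ℝ) ^ r₁ - 1) - 1)
    ∧ (1 / b) * (a * Pmax / ((2:ℝ) ^ r₁ - 1) - 1) ≤ Pmax
    ∧ Real.logb 2
        (1 + a * Pmax / (1 + b * ((1 / b) * (a * Pmax / ((2:ℝ) ^ r₁ - 1) - 1)))) = r₁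
    ∧ ∀ P₁ ∈ Icc (0:ℝ) Pmax, ∀ P₂ ∈ Icc (0:ℝ) Pmax,
        Real.logb 2 (1 + a * P₁ / (1 + b * P₂)) = r₁ →
        Real.logb 2 (1 + c * P₂ / (1 + d * P₁))
          ≤ Real.logb 2
              (1 + c * ((1 / b) * (a * Pmax / ((2:ℝ) ^ r₁ - 1) - 1)) /
                (1 + d * Pmax)) := by
  have h2 : (1:ℝ) < 2 := one_lt_two
  have hden : (0:ℝ) < 1 + b * Pmax := by positivity
  have hx1 : (0:ℝ) < 1 + a * Pmax / (1 + b * Pmax) := by positivity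
  have hx2 : (0:ℝ) < 1 + a * Pmax := by positivity
  -- bounds on 2 ^ r₁
  have h1 : 1 + a * Pmax / (1 + b * Pmax) ≤ (2:ℝ) ^ r₁ := by
    calc 1 + a * Pmax / (1 + b * Pmax)
        = (2:ℝ) ^ (Real.logb 2 (1 + a * Pmax / (1 + b * Pmax))) :=
          (Real.rpow_logb (by norm_num) (by norm_num) hx1).symm
      _ ≤ (2:ℝ) ^ r₁ := Real.rpow_le_rpow_left_iff h2 |>.mpr hr₁
  have h2' : (2:ℝ) ^ r₁ ≤ 1 + a * Pmax := by
    calc (2:ℝ) ^ r₁ ≤ (2:ℝ) ^ (Real.logb 2 (1 + a * Pmax)) :=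
          Real.rpow_le_rpow_left_iff h2 |>.mpr hr₂
      _ = 1 + a * Pmax := Real.rpow_logb (by norm_num) (by norm_num) hx2
  set E : ℝ := (2:ℝ) ^ r₁ - 1 with hE
  have hEpos : 0 < E := by
    have : 0 < a * Pmax / (1 + b * Pmax) := by positivity
    simp only [hE]; linarith
  have hEle : E ≤ a * Pmax := by simp only [hE]; linarith
  have hEge : a * Pmax / (1 + b * Pmax) ≤ E := by simp only [hE]; linarith
  set Q : ℝ := (1 / b) * (a * Pmax / E - 1) with hQ
  have hQ0 : 0 ≤ Q := by
    have : (1:ℝ) ≤ a * Pmax / E := (one_le_div hEpos).mpr hEle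
    have hb' : 0 < 1 / b := by positivity
    nlinarith
  have hQP : Q ≤ Pmax := by
    have h' : a * Pmax ≤ E * (1 + b * Pmax) := by
      have := (div_le_iff₀ hden).mp hEge
      nlinarith
    have h'' : a * Pmax / E ≤ 1 + b * Pmax := (div_le_iff₀ hEpos).mpr (by nlinarith)
    rw [hQ]
    rw [div_mul_eq_mul_div, one_mul, div_le_iff₀ hb]
    nlinarith
  have hbQ : 1 + b * Q = a * Pmax / E := by
    rw [hQ, ← mul_assoc, mul_one_div_cancel hb.ne', one_mul]; ring
  refine ⟨hQ0, hQP, ?_, ?_⟩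
  · rw [hbQ]
    have hAP : (0:ℝ) < a * Pmax / E := by positivity
    have : a * Pmax / (a * Pmax / E) = E := by
      field_simp
    rw [this]
    have : (1:ℝ) + E = (2:ℝ) ^ r₁ := by simp [hE]
    rw [this]
    exact Real.logb_rpow (by norm_num) (by norm_num)
  · rintro P₁ ⟨hP₁0, hP₁max⟩ P₂ ⟨hP₂0, hP₂max⟩ hcon
    have hdenP : (0:ℝ) < 1 + b * P₂ := by have := mul_nonneg hb.le hP₂0; linarith
    have hxP : (0:ℝ) < 1 + a * P₁ / (1 + b * P₂) := by positivity
    have hkey : 1 + a * P₁ / (1 + b * P₂) = (2:ℝ) ^ r₁ := by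
      rw [← hcon]
      exact (Real.rpow_logb (by norm_num) (by norm_num) hxP).symm
    have hcon' : a * P₁ = E * (1 + b * P₂) := by
      have h : a * P₁ / (1 + b * P₂) = E := by simp only [hE]; linarith only [hkey]
      rw [div_eq_iff hdenP.ne'] at h
      linarith
    -- key inequality : c*P₂/(1+d*P₁) ≤ c*Q/(1+d*Pmax)
    have hd1 : (0:ℝ) < 1 + d * P₁ := by have := mul_nonneg hd hP₁0; linarith
    have hd2 : (0:ℝ) < 1 + d * Pmax := by have := mul_nonneg hd hP.le; linarith
    have hbQ'' : E * (b * Q) = a * Pmax - E := by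
      have : b * Q = a * Pmax / E - 1 := by rw [hQ, ← mul_assoc, mul_one_div_cancel hb.ne', one_mul]
      rw [this]; field_simp
    have hP2E : E * (b * P₂) = a * P₁ - E := by linear_combination -hcon'
    have main : c * (a * P₁ - E) * (1 + d * Pmax) ≤ c * (a * Pmax - E) * (1 + d * P₁) := by
      have t : 0 ≤ c * ((a + E * d) * (Pmax - P₁)) := by
        apply mul_nonneg hc.le
        apply mul_nonneg (by positivity) (by linarith)
      have eqm : c * (a * Pmax - E) * (1 + d * P₁) - c * (a * P₁ - E) * (1 + d * Pmax)
          = c * ((a + E * d) * (Pmax - P₁)) := by ring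
      linarith [t, eqm]
    have hbE : (0:ℝ) < b * E := by positivity
    have e1 : b * E * (c * P₂ * (1 + d * Pmax)) = c * (a * P₁ - E) * (1 + d * Pmax) := by
      linear_combination c * (1 + d * Pmax) * hP2E
    have e2 : b * E * (c * Q * (1 + d * P₁)) = c * (a * Pmax - E) * (1 + d * P₁) := by
      linear_combination c * (1 + d * P₁) * hbQ''
    have hineq : c * P₂ / (1 + d * P₁) ≤ c * Q / (1 + d * Pmax) := by
      rw [div_le_div_iff₀ hd1 hd2]
      have : b * E * (c * P₂ * (1 + d * Pmax)) ≤ b * E * (c * Q * (1 + d * P₁)) := by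
        rw [e1, e2]; exact main
      exact (mul_le_mul_iff_right₀ hbE).mp this
    have hpos1 : (0:ℝ) < 1 + c * P₂ / (1 + d * P₁) := by positivity
    exact Real.logb_le_logb_of_le one_lt_two hpos1 (by linarith)
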